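/- For every team i and every TTP-2 itinerary pattern P for i, the cost of P is at least D_i + D_M, where D_M is the minimum weight of a pairing (perfect matching) of the n teams. -/

import Mathlib

open Finset

/-- Feasibility of a TTP-2 schedule given by opponent and home/away functions. -/
def ttpFeasible (n : ℕ) (opp : Fin (2*(n-1)) → Fin n → Fin n)
    (loc : Fin (2*(n-1)) → Fin n → Bool) : Prop :=
  (∀ d i, opp d i ≠ i) ∧
  (∀ d i, opp d (opp d i) = i) ∧
  (∀ d i, loc d (opp d i) = !(loc d i)) ∧
  (∀ i j : Fin n, i ≠ j → ∃! d : Fin (2*(n-1)), opp d i = j ∧ loc d i = false) ∧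
  (∀ (d : ℕ) (hd : d + 1 < 2*(n-1)) (i : Fin n),
      opp ⟨d+1, hd⟩ i ≠ opp ⟨d, by omega⟩ i) ∧
  (∀ (d : ℕ) (hd : d + 2 < 2*(n-1)) (i : Fin n),
      ¬(loc ⟨d+1, by omega⟩ i = loc ⟨d, by omega⟩ i ∧
        loc ⟨d+2, hd⟩ i = loc ⟨d+1, by omega⟩ i))

/-- The venue of team `i` on day `d` (days indexed by naturals; out-of-range
days, which never occur below, default to home). -/
def ttpVen (n : ℕ) (opp : Fin (2*(n-1)) → Fin n → Fin n)
    (loc : Fin (2*(n-1)) → Fin n → Bool) (d : ℕ) (i : Fin n) : Fin n :=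
  if h : d < 2*(n-1) then (if loc ⟨d, h⟩ i then i else opp ⟨d, h⟩ i) else i

/-- The travel distance of team `i` in a schedule. -/
noncomputable def ttpTravel (n : ℕ) (D : Fin n → Fin n → ℝ)
    (opp : Fin (2*(n-1)) → Fin n → Fin n)
    (loc : Fin (2*(n-1)) → Fin n → Bool) (i : Fin n) : ℝ :=
  D i (ttpVen n opp loc 0 i)
  + ∑ d ∈ Finset.range (2*(n-1) - 1),
      D (ttpVen n opp loc d i) (ttpVen n opp loc (d+1) i)
  + D (ttpVen n opp loc (2*(n-1) - 1) i) i

/-- The total distance of a schedule. -/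
noncomputable def ttpTotal (n : ℕ) (D : Fin n → Fin n → ℝ)
    (opp : Fin (2*(n-1)) → Fin n → Fin n)
    (loc : Fin (2*(n-1)) → Fin n → Bool) : ℝ :=
  ∑ i : Fin n, ttpTravel n D opp loc i

/-- A pairing (perfect matching) of the `n` teams: a family of blocks of size 2
covering every team exactly once. -/
def isPairing (n : ℕ) (M : Finset (Finset (Fin n))) : Prop :=
  (∀ e ∈ M, e.card = 2) ∧ (∀ i : Fin n, ∃! e, e ∈ M ∧ i ∈ e)

/-- The weight `D a b` of a block `{a, b}` (written symmetrically). -/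
noncomputable def blockWeight (n : ℕ) (D : Fin n → Fin n → ℝ)
    (f : Finset (Fin n)) : ℝ :=
  (∑ a ∈ f, ∑ b ∈ f, D a b) / 2

/-- The weight of a pairing: the sum of `D a b` over its blocks `{a, b}`. -/
noncomputable def pairingWeight (n : ℕ) (D : Fin n → Fin n → ℝ)
    (M : Finset (Finset (Fin n))) : ℝ :=
  ∑ e ∈ M, blockWeight n D e

/-- `D_G`: the sum of `D i j` over all unordered pairs of distinct teams. -/
noncomputable def sumDG (n : ℕ) (D : Fin n → Fin n → ℝ) : ℝ :=
  (∑ i : Fin n, ∑ j ∈ Finset.univ.erase i, D i j) / 2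

/-- `D_i`: the sum of `D i j` over all `j ≠ i`. -/
noncomputable def sumDi (n : ℕ) (D : Fin n → Fin n → ℝ) (i : Fin n) : ℝ :=
  ∑ j ∈ Finset.univ.erase i, D i j

/-- The distance matrix axioms: zero diagonal, nonnegativity, symmetry and the
triangle inequality. -/
def isMetric (n : ℕ) (D : Fin n → Fin n → ℝ) : Prop :=
  (∀ i, D i i = 0) ∧ (∀ i j, 0 ≤ D i j) ∧ (∀ i j, D i j = D j i) ∧
  (∀ i j h, D i j ≤ D i h + D h j)

/-- A TTP-2 itinerary pattern for team `i`: a partition of the set of the other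
teams into blocks of size 1 or 2. -/
def isPattern (n : ℕ) (i : Fin n) (P : Finset (Finset (Fin n))) : Prop :=
  (∀ e ∈ P, e.card = 1 ∨ e.card = 2) ∧
  (∀ e ∈ P, i ∉ e) ∧
  (∀ j : Fin n, j ≠ i → ∃! e, e ∈ P ∧ j ∈ e)

/-- The cost of an itinerary pattern: `2 * D i a` for a singleton block `{a}`,
and `D i a + D a b + D b i` for a block `{a, b}` of size 2. -/
noncomputable def patternCost (n : ℕ) (D : Fin n → Fin n → ℝ) (i : Fin n)
    (P : Finset (Finset (Fin n))) : ℝ :=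
  ∑ e ∈ P, ((∑ a ∈ e, D i a) +
    if e.card = 1 then ∑ a ∈ e, D i a else blockWeight n D e)

/-- `D(e, f)`: the sum of `D a b` over `a ∈ e` and `b ∈ f`. -/
noncomputable def crossDist (n : ℕ) (D : Fin n → Fin n → ℝ)
    (e f : Finset (Fin n)) : ℝ :=
  ∑ a ∈ e, ∑ b ∈ f, D a b


/-- Any finset of even cardinality admits a perfect matching into 2-blocks. -/
lemma exists_matching_aux (n k : ℕ) : ∀ s : Finset (Fin n), s.card = 2 * k →
    ∃ N : Finset (Finset (Fin n)), (∀ e ∈ N, e.card = 2) ∧ (∀ e ∈ N, e ⊆ s) ∧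
      (∀ x ∈ s, ∃! e, e ∈ N ∧ x ∈ e) := by
  induction k with
  | zero =>
    intro s hs
    refine ⟨∅, by simp, by simp, ?_⟩
    intro x hx
    simp [Finset.card_eq_zero.mp (by omega : s.card = 0)] at hx
  | succ k ih =>
    intro s hs
    obtain ⟨a, ha⟩ : s.Nonempty := Finset.card_pos.mp (by omega)
    obtain ⟨b, hb⟩ : (s.erase a).Nonempty := Finset.card_pos.mp (by
      rw [Finset.card_erase_of_mem ha]; omega)
    have hba : b ≠ a := Finset.ne_of_mem_erase hb
    have hbs : b ∈ s := Finset.mem_of_mem_erase hb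
    set s' := (s.erase a).erase b with hs'
    have hcard : s'.card = 2 * k := by
      rw [hs', Finset.card_erase_of_mem hb, Finset.card_erase_of_mem ha]; omega
    obtain ⟨N', hN1, hN2, hN3⟩ := ih s' hcard
    have has' : a ∉ s' := fun h => (Finset.ne_of_mem_erase (Finset.mem_of_mem_erase h)) rfl
    have hbs' : b ∉ s' := fun h => (Finset.ne_of_mem_erase h) rfl
    refine ⟨insert {a, b} N', ?_, ?_, ?_⟩
    · intro e he
      rcases Finset.mem_insert.mp he with rfl | he
      · exact Finset.card_pair (hba.symm) 
      · exact hN1 e he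
    · intro e he
      rcases Finset.mem_insert.mp he with rfl | he
      · intro x hx
        rcases Finset.mem_insert.mp hx with rfl | hx
        · exact ha
        · rw [Finset.mem_singleton.mp hx]; exact hbs
      · exact (hN2 e he).trans (Finset.erase_subset _ _ |>.trans (Finset.erase_subset _ _))
    · intro x hx
      by_cases hxab : x = a ∨ x = b
      · refine ⟨{a, b}, ⟨Finset.mem_insert_self _ _, ?_⟩, ?_⟩
        · rcases hxab with rfl | rfl
          · exact Finset.mem_insert_self _ _
          · exact Finset.mem_insert_of_mem (Finset.mem_singleton_self _)
        · rintro e ⟨he, hxe⟩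
          rcases Finset.mem_insert.mp he with rfl | he
          · rfl
          · exfalso
            have := hN2 e he hxe
            rcases hxab with rfl | rfl
            · exact has' this
            · exact hbs' this
      · push_neg at hxab
        have hxs' : x ∈ s' := by
          rw [hs']
          exact Finset.mem_erase.mpr ⟨hxab.2, Finset.mem_erase.mpr ⟨hxab.1, hx⟩⟩
        obtain ⟨e, ⟨heN, hxe⟩, hu⟩ := hN3 x hxs'
        refine ⟨e, ⟨Finset.mem_insert_of_mem heN, hxe⟩, ?_⟩
        rintro f ⟨hf, hxf⟩
        rcases Finset.mem_insert.mp hf with rfl | hf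
        · exfalso
          rcases Finset.mem_insert.mp hxf with rfl | hxf
          · exact hxab.1 rfl
          · exact hxab.2 (Finset.mem_singleton.mp hxf)
        · exact hu f ⟨hf, hxf⟩

lemma blockWeight_two_le (n : ℕ) (D : Fin n → Fin n → ℝ) (hD : isMetric n D)
    (i : Fin n) (e : Finset (Fin n)) (he : e.card = 2) :
    blockWeight n D e ≤ ∑ x ∈ e, D i x := by
  obtain ⟨h0, hnn, hsym, htri⟩ := hD
  obtain ⟨a, b, hab, rfl⟩ := Finset.card_eq_two.mp he
  have hb : a ∉ ({b} : Finset (Fin n)) := by simp [hab]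
  rw [blockWeight]
  simp only [Finset.sum_insert hb, Finset.sum_singleton]
  have : D a b ≤ D i a + D i b := by
    calc D a b ≤ D a i + D i b := htri a b i
    _ = D i a + D i b := by rw [hsym a i]
  rw [h0 a, h0 b, hsym b a]
  linarith

lemma blockWeight_two_eq (n : ℕ) (D : Fin n → Fin n → ℝ) (hD : isMetric n D)
    (a b : Fin n) (hab : a ≠ b) :
    blockWeight n D {a, b} = D a b := by
  obtain ⟨h0, hnn, hsym, htri⟩ := hD
  have hb : a ∉ ({b} : Finset (Fin n)) := by simp [hab]
  rw [blockWeight]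
  simp only [Finset.sum_insert hb, Finset.sum_singleton]
  rw [h0 a, h0 b, hsym b a]
  ring

/-- The cost of any TTP-2 itinerary pattern of team `i` is at least
`D_i + D_M`, where `D_M` is the minimum weight of a pairing. -/
theorem pattern_cost_ge_Di_add_DM (n : ℕ) (hn : 4 ≤ n) (hne : Even n)
    (D : Fin n → Fin n → ℝ) (hD : isMetric n D)
    (M : Finset (Finset (Fin n))) (hM : isPairing n M)
    (hMmin : ∀ M' : Finset (Finset (Fin n)), isPairing n M' →
      pairingWeight n D M ≤ pairingWeight n D M')
    (i : Fin n) (P : Finset (Finset (Fin n))) (hP : isPattern n i P) :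
    sumDi n D i + pairingWeight n D M ≤ patternCost n D i P := by
  classical
  obtain ⟨h0, hnn, hsym, htri⟩ := hD
  obtain ⟨hPcard, hPi, hPuniq⟩ := hP
  -- pairwise disjointness of P's blocks
  have hPdisj : (P : Set (Finset (Fin n))).PairwiseDisjoint id := by
    intro e he f hf hef
    have he' := Finset.mem_coe.mp he
    have hf' := Finset.mem_coe.mp hf
    refine Finset.disjoint_left.mpr ?_
    intro x hxe hxf
    have hxi : x ≠ i := fun h => hPi e he' (h ▸ hxe)
    obtain ⟨g, _, hu⟩ := hPuniq x hxi
    exact hef ((hu e ⟨he', hxe⟩).trans (hu f ⟨hf', hxf⟩).symm)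
  have hBU : P.biUnion id = Finset.univ.erase i := by
    ext j
    simp only [Finset.mem_biUnion, id, Finset.mem_erase, Finset.mem_univ, and_true]
    constructor
    · rintro ⟨e, he, hje⟩
      exact fun h => hPi e he (h ▸ hje)
    · intro hj
      obtain ⟨e, ⟨he, hje⟩, _⟩ := hPuniq j hj
      exact ⟨e, he, hje⟩
  set P₁ := P.filter (fun e => e.card = 1) with hP₁
  set P₂ := P.filter (fun e => ¬ e.card = 1) with hP₂
  have hP₂two : ∀ e ∈ P₂, e.card = 2 := by
    intro e he
    rw [hP₂, Finset.mem_filter] at he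
    rcases hPcard e he.1 with h | h
    · exact absurd h he.2
    · exact h
  set T := P₁.biUnion id with hT
  have hP₁disj : (P₁ : Set (Finset (Fin n))).PairwiseDisjoint id := by
    intro e he f hf hef
    exact hPdisj (Finset.mem_coe.mpr (Finset.mem_of_mem_filter _ (Finset.mem_coe.mp he)))
      (Finset.mem_coe.mpr (Finset.mem_of_mem_filter _ (Finset.mem_coe.mp hf))) hef
  have hTsub : ∀ x ∈ T, x ≠ i ∧ ∃ e ∈ P₁, x ∈ e := by
    intro x hx
    obtain ⟨e, he, hxe⟩ := Finset.mem_biUnion.mp hx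
    exact ⟨fun h => hPi e (Finset.mem_of_mem_filter _ he) (h ▸ hxe), e, he, hxe⟩
  have hiT : i ∉ T := fun h => (hTsub i h).1 rfl
  -- a member of a P₂ block is not in insert i T
  have hP₂out : ∀ f ∈ P₂, ∀ x ∈ f, x ∉ insert i T := by
    intro f hf x hxf hx
    have hfP : f ∈ P := Finset.mem_of_mem_filter _ hf
    rcases Finset.mem_insert.mp hx with rfl | hxT
    · exact hPi f hfP hxf
    · obtain ⟨hxi, e, he, hxe⟩ := hTsub x hxT
      obtain ⟨g, _, hu⟩ := hPuniq x hxi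
      have : f = e := (hu f ⟨hfP, hxf⟩).trans (hu e ⟨Finset.mem_of_mem_filter _ he, hxe⟩).symm
      have h1 : e.card = 1 := (Finset.mem_filter.mp he).2
      exact (Finset.mem_filter.mp hf).2 (this ▸ h1)
  -- cardinality bookkeeping
  have hcardP : ∑ e ∈ P, e.card = n - 1 := by
    have h := Finset.card_biUnion (s := P) (t := id)
      (fun e he f hf hne => hPdisj (Finset.mem_coe.mpr he) (Finset.mem_coe.mpr hf) hne)
    rw [hBU, Finset.card_erase_of_mem (Finset.mem_univ i), Finset.card_univ,
      Fintype.card_fin] at h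
    simpa using h.symm
  have hcardT : T.card = P₁.card := by
    have h := Finset.card_biUnion (s := P₁) (t := id)
      (fun e he f hf hne => hP₁disj (Finset.mem_coe.mpr he) (Finset.mem_coe.mpr hf) hne)
    simp only [id] at h
    rw [hT, h, Finset.sum_congr rfl (fun e he => (Finset.mem_filter.mp he).2)]
    simp [hP₁]
  have hsplitcard : P₁.card + 2 * P₂.card = n - 1 := by
    have h1 : ∑ e ∈ P₁, e.card = P₁.card := by
      rw [Finset.sum_congr rfl (fun e he => (Finset.mem_filter.mp he).2)]; simp [hP₁]
    have h2 : ∑ e ∈ P₂, e.card = 2 * P₂.card := by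
      rw [Finset.sum_congr rfl (fun e he => hP₂two e he)]
      simp [mul_comm]
    have h3 : ∑ e ∈ P₁, e.card + ∑ e ∈ P₂, e.card = ∑ e ∈ P, e.card :=
      Finset.sum_filter_add_sum_filter_not P (fun e => e.card = 1) _
    omega
  obtain ⟨m, hm⟩ := hne
  have hkey : (insert i T).card = 2 * (m - P₂.card) := by
    rw [Finset.card_insert_of_notMem hiT, hcardT]
    omega
  obtain ⟨N, hN1, hN2, hN3⟩ := exists_matching_aux n (m - P₂.card) (insert i T) hkey
  have hNdisj : ((N : Set (Finset (Fin n)))).PairwiseDisjoint id := by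
    intro e he f hf hef
    refine Finset.disjoint_left.mpr ?_
    intro x hxe hxf
    have hxs := hN2 e (Finset.mem_coe.mp he) hxe
    obtain ⟨g, _, hu⟩ := hN3 x hxs
    exact hef ((hu e ⟨Finset.mem_coe.mp he, hxe⟩).trans (hu f ⟨Finset.mem_coe.mp hf, hxf⟩).symm)
  have hNBU : N.biUnion id = insert i T := by
    apply Finset.Subset.antisymm
    · intro x hx
      obtain ⟨e, he, hxe⟩ := Finset.mem_biUnion.mp hx
      exact hN2 e he hxe
    · intro x hx
      obtain ⟨e, ⟨he, hxe⟩, _⟩ := hN3 x hx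
      exact Finset.mem_biUnion.mpr ⟨e, he, hxe⟩
  -- P₂ and N are disjoint
  have hP₂N : Disjoint P₂ N := by
    refine Finset.disjoint_left.mpr ?_
    intro f hf hfN
    have : f.Nonempty := Finset.card_pos.mp (by rw [hP₂two f hf]; omega)
    obtain ⟨x, hx⟩ := this
    exact hP₂out f hf x hx (hN2 f hfN hx)
  set M' := P₂ ∪ N with hM'
  have hM'pair : isPairing n M' := by
    constructor
    · intro e he
      rcases Finset.mem_union.mp he with he | he
      · exact hP₂two e he
      · exact hN1 e he
    · intro x
      by_cases hx : x ∈ insert i T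
      · obtain ⟨e, ⟨heN, hxe⟩, hu⟩ := hN3 x hx
        refine ⟨e, ⟨Finset.mem_union_right _ heN, hxe⟩, ?_⟩
        rintro f ⟨hf, hxf⟩
        rcases Finset.mem_union.mp hf with hf | hf
        · exact absurd hx (hP₂out f hf x hxf)
        · exact hu f ⟨hf, hxf⟩
      · have hxi : x ≠ i := fun h => hx (h ▸ Finset.mem_insert_self i T)
        obtain ⟨e, ⟨heP, hxe⟩, hu⟩ := hPuniq x hxi
        have heP₂ : e ∈ P₂ := by
          rw [hP₂, Finset.mem_filter]
          refine ⟨heP, fun h1 => ?_⟩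
          exact hx (Finset.mem_insert_of_mem (Finset.mem_biUnion.mpr
            ⟨e, Finset.mem_filter.mpr ⟨heP, h1⟩, hxe⟩))
        refine ⟨e, ⟨Finset.mem_union_left _ heP₂, hxe⟩, ?_⟩
        rintro f ⟨hf, hxf⟩
        rcases Finset.mem_union.mp hf with hf | hf
        · exact hu f ⟨Finset.mem_of_mem_filter _ hf, hxf⟩
        · exact absurd (hN2 f hf hxf) hx
  -- weight bounds
  have hNweight : ∑ e ∈ N, blockWeight n D e ≤ ∑ x ∈ T, D i x := by
    have h1 : ∑ e ∈ N, blockWeight n D e ≤ ∑ e ∈ N, ∑ x ∈ e, D i x :=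
      Finset.sum_le_sum (fun e he => blockWeight_two_le n D ⟨h0, hnn, hsym, htri⟩ i e (hN1 e he))
    have h2 : ∑ e ∈ N, ∑ x ∈ e, D i x = ∑ x ∈ insert i T, D i x := by
      rw [← hNBU, Finset.sum_biUnion hNdisj]; rfl
    rw [h2, Finset.sum_insert hiT, h0 i, zero_add] at h1
    exact h1
  -- pattern cost decomposition
  have hcost : patternCost n D i P
      = sumDi n D i + (∑ x ∈ T, D i x) + ∑ e ∈ P₂, blockWeight n D e := by
    rw [patternCost, Finset.sum_add_distrib]
    have hA : ∑ e ∈ P, ∑ a ∈ e, D i a = sumDi n D i := by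
      rw [sumDi, ← hBU, Finset.sum_biUnion hPdisj]; rfl
    have hBsplit : ∑ e ∈ P₁, (if e.card = 1 then ∑ a ∈ e, D i a else blockWeight n D e)
        + ∑ e ∈ P₂, (if e.card = 1 then ∑ a ∈ e, D i a else blockWeight n D e)
        = ∑ e ∈ P, (if e.card = 1 then ∑ a ∈ e, D i a else blockWeight n D e) :=
      Finset.sum_filter_add_sum_filter_not P (fun e => e.card = 1) _
    have hB1 : ∑ e ∈ P₁, (if e.card = 1 then ∑ a ∈ e, D i a else blockWeight n D e)
        = ∑ x ∈ T, D i x := by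
      have h1 : ∑ e ∈ P₁, (if e.card = 1 then ∑ a ∈ e, D i a else blockWeight n D e)
          = ∑ e ∈ P₁, ∑ a ∈ e, D i a :=
        Finset.sum_congr rfl (fun e he => if_pos (Finset.mem_filter.mp he).2)
      rw [h1, hT, Finset.sum_biUnion hP₁disj]; rfl
    have hB2 : ∑ e ∈ P₂, (if e.card = 1 then ∑ a ∈ e, D i a else blockWeight n D e)
        = ∑ e ∈ P₂, blockWeight n D e :=
      Finset.sum_congr rfl (fun e he => by rw [if_neg (Finset.mem_filter.mp he).2])
    rw [hA, ← hBsplit, hB1, hB2]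
    ring
  have hMM' : pairingWeight n D M ≤ pairingWeight n D M' := hMmin M' hM'pair
  have hM'w : pairingWeight n D M'
      = ∑ e ∈ P₂, blockWeight n D e + ∑ e ∈ N, blockWeight n D e := by
    rw [pairingWeight, hM', Finset.sum_union hP₂N]
  rw [hcost]
  calc sumDi n D i + pairingWeight n D M
      ≤ sumDi n D i + pairingWeight n D M' := by linarith
    _ = sumDi n D i + (∑ e ∈ P₂, blockWeight n D e + ∑ e ∈ N, blockWeight n D e) := by
        rw [hM'w]
    _ ≤ sumDi n D i + (∑ x ∈ T, D i x) + ∑ e ∈ P₂, blockWeight n D e := by linarith
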